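/- arXiv:math/0501129 — 9 statements merged into one kernel-verified Lean document; each statement's English description precedes it below -/
import Mathlib

section
/- Let H be an inner product space over ℝ or ℂ and x, y ∈ H \ {0}. Then ‖x‖‖y‖ − Re⟨x,y⟩ ≤ 2‖x‖‖y‖ (‖x−y‖/(‖x‖+‖y‖))². -/
theorem stmt1 {𝕜 : Type*} [RCLike 𝕜] {H : Type*} [NormedAddCommGroup H]
    [InnerProductSpace 𝕜 H] (x y : H) (hx : x ≠ 0) (hy : y ≠ 0) :
    ‖x‖ * ‖y‖ - RCLike.re (inner 𝕜 x y : 𝕜) ≤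
      2 * (‖x‖ * ‖y‖) * (‖x - y‖ / (‖x‖ + ‖y‖)) ^ 2 := by
  have ha : (0:ℝ) < ‖x‖ := norm_pos_iff.mpr hx
  have hb : (0:ℝ) < ‖y‖ := norm_pos_iff.mpr hy
  have hsq : ‖x - y‖ ^ 2 = ‖x‖ ^ 2 - 2 * RCLike.re (inner 𝕜 x y : 𝕜) + ‖y‖ ^ 2 :=
    @norm_sub_sq 𝕜 _ _ _ _ x y
  have habs : |RCLike.re (inner 𝕜 x y : 𝕜)| ≤ ‖x‖ * ‖y‖ :=
    (RCLike.abs_re_le_norm _).trans (norm_inner_le_norm x y)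
  have h1 : RCLike.re (inner 𝕜 x y : 𝕜) ≤ ‖x‖ * ‖y‖ := (abs_le.mp habs).2
  have h2 : -(‖x‖ * ‖y‖) ≤ RCLike.re (inner 𝕜 x y : 𝕜) := (abs_le.mp habs).1
  have hab : (0:ℝ) < ‖x‖ + ‖y‖ := by linarith
  rw [div_pow, ← mul_div_assoc, le_div_iff₀ (by positivity)]
  nlinarith [sq_nonneg (‖x‖ - ‖y‖), sq_nonneg (‖x‖ + ‖y‖), mul_pos ha hb]
end

section
/- Let H be an inner product space over ℝ or ℂ, x, y ∈ H \ {0} and ρ > 0 such that ‖x/‖y‖ − y/‖x‖‖ ≤ ρ. Then ‖x‖‖y‖ − Re⟨x,y⟩ ≤ (1/2) ρ² ‖x‖‖y‖. -/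
theorem stmt2 {𝕜 : Type*} [RCLike 𝕜] {H : Type*} [NormedAddCommGroup H]
    [InnerProductSpace 𝕜 H] (x y : H) (hx : x ≠ 0) (hy : y ≠ 0) (ρ : ℝ) (hρ : 0 < ρ)
    (h : ‖((‖y‖ : 𝕜)⁻¹ • x) - (‖x‖ : 𝕜)⁻¹ • y‖ ≤ ρ) :
    ‖x‖ * ‖y‖ - RCLike.re (inner 𝕜 x y : 𝕜) ≤ (1 / 2) * ρ ^ 2 * (‖x‖ * ‖y‖) := by
  have hnx : (0:ℝ) < ‖x‖ := norm_pos_iff.mpr hx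
  have hny : (0:ℝ) < ‖y‖ := norm_pos_iff.mpr hy
  have hsq : ‖((‖y‖ : 𝕜)⁻¹ • x) - (‖x‖ : 𝕜)⁻¹ • y‖ ^ 2
      = ‖x‖^2/‖y‖^2 + ‖y‖^2/‖x‖^2 - 2 * (RCLike.re (inner 𝕜 x y : 𝕜)) / (‖x‖ * ‖y‖) := by
    have hns : ∀ r : ℝ, RCLike.normSq (r : 𝕜) = r ^ 2 := by
      intro r; simp [RCLike.normSq_eq_def', RCLike.norm_ofReal, sq_abs]
    rw [@norm_sub_sq 𝕜]
    simp [norm_smul, inner_smul_left, inner_smul_right, hns, mul_comm]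
    field_simp
    ring
  have hle : ‖((‖y‖ : 𝕜)⁻¹ • x) - (‖x‖ : 𝕜)⁻¹ • y‖ ^ 2 ≤ ρ ^ 2 := by
    have := norm_nonneg (((‖y‖ : 𝕜)⁻¹ • x) - (‖x‖ : 𝕜)⁻¹ • y)
    nlinarith
  rw [hsq] at hle
  have key : ‖x‖^2/‖y‖^2 + ‖y‖^2/‖x‖^2 ≥ 2 := by
    rw [ge_iff_le, div_add_div _ _ (by positivity) (by positivity), le_div_iff₀ (by positivity)]
    nlinarith [sq_nonneg (‖x‖^2 - ‖y‖^2)]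
  have h2 : 2 - 2 * (RCLike.re (inner 𝕜 x y : 𝕜)) / (‖x‖ * ‖y‖) ≤ ρ ^ 2 := by linarith
  have hpos : (0:ℝ) < ‖x‖ * ‖y‖ := by positivity
  have h3 : 2 * RCLike.re (inner 𝕜 x y : 𝕜) / (‖x‖ * ‖y‖) * (‖x‖ * ‖y‖)
      = 2 * RCLike.re (inner 𝕜 x y : 𝕜) := div_mul_cancel₀ _ hpos.ne'
  nlinarith [mul_le_mul_of_nonneg_right h2 hpos.le]
end

section
/- Let H be a real or complex inner product space, x, y ∈ H \ {0} with ‖x‖ ≥ ‖y‖, and r ≥ 1. Then ‖x‖‖y‖ − Re⟨x,y⟩ ≤ (1/2) r² (‖x‖/‖y‖)^{r−1} ‖x−y‖². -/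
theorem stmt4 {𝕜 : Type*} [RCLike 𝕜] {H : Type*} [NormedAddCommGroup H]
    [InnerProductSpace 𝕜 H] (x y : H) (hx : x ≠ 0) (hy : y ≠ 0) (hxy : ‖y‖ ≤ ‖x‖)
    (r : ℝ) (hr : 1 ≤ r) :
    ‖x‖ * ‖y‖ - RCLike.re (inner 𝕜 x y : 𝕜) ≤
      (1 / 2) * r ^ 2 * (‖x‖ / ‖y‖) ^ (r - 1) * ‖x - y‖ ^ 2 := by
  have hsq : ‖x - y‖ ^ 2 = ‖x‖ ^ 2 - 2 * RCLike.re (inner 𝕜 x y : 𝕜) + ‖y‖ ^ 2 :=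
    @norm_sub_sq 𝕜 _ _ _ _ x y
  have hy0 : (0:ℝ) < ‖y‖ := norm_pos_iff.mpr hy
  have h1 : (1:ℝ) ≤ ‖x‖ / ‖y‖ := (one_le_div hy0).mpr hxy
  have h2 : (1:ℝ) ≤ (‖x‖ / ‖y‖) ^ (r - 1) :=
    Real.one_le_rpow h1 (by linarith)
  have hn : (0:ℝ) ≤ ‖x - y‖ ^ 2 := sq_nonneg _
  nlinarith [sq_nonneg (‖x‖ - ‖y‖), sq_nonneg r, mul_le_mul_of_nonneg_right h2 hn,
    sq_nonneg (r - 1)]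
end

section
/- Let H be a real or complex inner product space, x, y ∈ H \ {0} with ‖x‖ ≥ ‖y‖, and r < 1. Then ‖x‖‖y‖ − Re⟨x,y⟩ ≤ (1/2) (‖x‖/‖y‖)^{1−r} ‖x−y‖². -/
theorem stmt5 {𝕜 : Type*} [RCLike 𝕜] {H : Type*} [NormedAddCommGroup H]
    [InnerProductSpace 𝕜 H] (x y : H) (hx : x ≠ 0) (hy : y ≠ 0) (hxy : ‖y‖ ≤ ‖x‖)
    (r : ℝ) (hr : r < 1) :
    ‖x‖ * ‖y‖ - RCLike.re (inner 𝕜 x y : 𝕜) ≤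
      (1 / 2) * (‖x‖ / ‖y‖) ^ (1 - r) * ‖x - y‖ ^ 2 := by
  have hy0 : 0 < ‖y‖ := norm_pos_iff.mpr hy
  have hsq : ‖x - y‖ ^ 2 = ‖x‖ ^ 2 - 2 * RCLike.re (inner 𝕜 x y : 𝕜) + ‖y‖ ^ 2 :=
    @norm_sub_sq 𝕜 _ _ _ _ x y
  have h1 : ‖x‖ * ‖y‖ - RCLike.re (inner 𝕜 x y : 𝕜) ≤ (1/2) * ‖x - y‖ ^ 2 := by
    nlinarith [sq_nonneg (‖x‖ - ‖y‖)]
  have h2 : (1:ℝ) ≤ (‖x‖ / ‖y‖) ^ (1 - r) :=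
    Real.one_le_rpow ((one_le_div hy0).mpr hxy) (by linarith)
  nlinarith [sq_nonneg ‖x - y‖, h1, h2]
end

section
/- Let H be a complex inner product space and α ∈ ℂ \ {0}. Then for all x, y ∈ H, ‖x‖‖y‖ − Re[(α²/|α|²)⟨x,y⟩] ≤ (1/2)·(|Re α|·‖x−y‖ + |Im α|·‖x+y‖)² / |α|². -/
theorem stmt9 {H : Type*} [NormedAddCommGroup H] [InnerProductSpace ℂ H]
    (α : ℂ) (hα : α ≠ 0) (x y : H) :
    ‖x‖ * ‖y‖ - ((α ^ 2 / ((‖α‖ : ℂ) ^ 2)) * (inner ℂ x y : ℂ)).re ≤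
      (1 / 2) * (|α.re| * ‖x - y‖ + |α.im| * ‖x + y‖) ^ 2 / ‖α‖ ^ 2 := by
  have hr0 : (0:ℝ) < ‖α‖ := norm_pos_iff.mpr hα
  set r : ℝ := ‖α‖ with hr
  set a : ℝ := α.re with ha
  set b : ℝ := α.im with hb
  set c : ℂ := α / (r:ℂ) with hc
  have hcn : ‖c‖ = 1 := by
    rw [hc, norm_div, Complex.norm_real, Real.norm_eq_abs, abs_of_pos hr0]
    exact div_self hr0.ne'
  set u : H := (starRingEnd ℂ c) • x with hu
  set v : H := c • y with hv
  have hinner : (inner ℂ u v : ℂ) = (α ^ 2 / ((‖α‖:ℂ) ^ 2)) * inner ℂ x y := by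
    rw [hu, hv, inner_smul_left, inner_smul_right, Complex.conj_conj, hc]
    ring
  have hun : ‖u‖ = ‖x‖ := by
    rw [hu, norm_smul, RCLike.norm_conj, hcn, one_mul]
  have hvn : ‖v‖ = ‖y‖ := by
    rw [hv, norm_smul, hcn, one_mul]
  have hsq : ‖u - v‖ ^ 2 = ‖u‖ ^ 2 - 2 * (inner ℂ u v : ℂ).re + ‖v‖ ^ 2 :=
    @norm_sub_sq ℂ _ _ _ _ u v
  have key : ‖x‖ * ‖y‖ - (inner ℂ u v : ℂ).re ≤ (1/2) * ‖u - v‖ ^ 2 := by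
    have h2 : 2 * ‖u‖ * ‖v‖ ≤ ‖u‖ ^ 2 + ‖v‖ ^ 2 := two_mul_le_add_sq ‖u‖ ‖v‖
    rw [hun, hvn] at h2 hsq
    linarith
  -- decompose u - v
  have hcre : (starRingEnd ℂ) c = (a:ℂ)/(r:ℂ) - (b:ℂ)*Complex.I/(r:ℂ) := by
    rw [hc, map_div₀]
    simp [Complex.ext_iff, ha, hb, neg_div]
  have hcc : c = (a:ℂ)/(r:ℂ) + (b:ℂ)*Complex.I/(r:ℂ) := by
    rw [hc]
    simp [Complex.ext_iff, ha, hb, div_eq_iff]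
  have hdecomp : u - v = ((a:ℂ)/(r:ℂ)) • (x - y) - ((b:ℂ)*Complex.I/(r:ℂ)) • (x + y) := by
    rw [hu, hv, hcre, hcc]
    module
  have hnorm : ‖u - v‖ ≤ (|a| * ‖x - y‖ + |b| * ‖x + y‖) / r := by
    rw [hdecomp]
    refine le_trans (norm_sub_le _ _) ?_
    rw [norm_smul, norm_smul]
    have h1 : ‖(a:ℂ)/(r:ℂ)‖ = |a| / r := by
      rw [norm_div]
      simp [Complex.norm_real, abs_of_pos hr0, hr]
    have h2 : ‖(b:ℂ)*Complex.I/(r:ℂ)‖ = |b| / r := by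
      rw [norm_div, norm_mul]
      simp [Complex.norm_real, abs_of_pos hr0, hr]
    rw [h1, h2]
    exact le_of_eq (by ring)
  have hfin : ‖u - v‖ ^ 2 ≤ ((|a| * ‖x - y‖ + |b| * ‖x + y‖) / r) ^ 2 :=
    pow_le_pow_left₀ (norm_nonneg _) hnorm 2
  rw [← hinner]
  have hdiv : ((|a| * ‖x - y‖ + |b| * ‖x + y‖) / r) ^ 2
      = (|a| * ‖x - y‖ + |b| * ‖x + y‖) ^ 2 / r ^ 2 := div_pow _ _ _
  rw [hdiv] at hfin
  calc ‖x‖ * ‖y‖ - (inner ℂ u v : ℂ).re ≤ (1/2) * ‖u - v‖ ^ 2 := key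
    _ ≤ (1/2) * ((|a| * ‖x - y‖ + |b| * ‖x + y‖) ^ 2 / r ^ 2) := by linarith
    _ = (1/2) * (|a| * ‖x - y‖ + |b| * ‖x + y‖) ^ 2 / r ^ 2 := by ring
end

section
/- Let H be a real or complex inner product space and p ≥ 1. Then for all x, y ∈ H, ‖x‖‖y‖ − Re⟨x,y⟩ ≤ (1/2)·[(‖x‖+‖y‖)^{2p} − ‖x+y‖^{2p}]^{1/p}. -/
theorem stmt10 {𝕜 : Type*} [RCLike 𝕜] {H : Type*} [NormedAddCommGroup H]
    [InnerProductSpace 𝕜 H] (p : ℝ) (hp : 1 ≤ p) (x y : H) :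
    ‖x‖ * ‖y‖ - RCLike.re (inner 𝕜 x y : 𝕜) ≤
      (1 / 2) * ((‖x‖ + ‖y‖) ^ (2 * p) - ‖x + y‖ ^ (2 * p)) ^ (1 / p) := by
  have hp0 : 0 < p := lt_of_lt_of_le one_pos hp
  set a : ℝ := ‖x‖ + ‖y‖ with ha
  set b : ℝ := ‖x + y‖ with hb
  have ha0 : 0 ≤ a := add_nonneg (norm_nonneg _) (norm_nonneg _)
  have hb0 : 0 ≤ b := norm_nonneg _
  have hba : b ≤ a := norm_add_le x y
  -- key identity
  have key : a ^ 2 - b ^ 2 = 2 * (‖x‖ * ‖y‖ - RCLike.re (inner 𝕜 x y : 𝕜)) := by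
    have h := norm_add_sq (𝕜 := 𝕜) x y
    rw [ha, hb, h]; ring
  have hrw : ∀ c : ℝ, 0 ≤ c → c ^ (2 * p) = (c ^ 2) ^ p := by
    intro c hc
    rw [show (2 : ℝ) * p = (2 : ℝ) * p from rfl, Real.rpow_mul hc,
      Real.rpow_two]
  rw [hrw a ha0, hrw b hb0]
  set A : ℝ := a ^ 2 with hA
  set B : ℝ := b ^ 2 with hB
  have hB0 : 0 ≤ B := sq_nonneg _
  have hBA : B ≤ A := by
    apply pow_le_pow_left₀ hb0 hba
  -- superadditivity
  have hsup : (A - B) ^ p + B ^ p ≤ A ^ p := by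
    have h := NNReal.add_rpow_le_rpow_add (NNReal.mk (A - B) (sub_nonneg.mpr hBA)) (NNReal.mk B hB0) hp
    have h' := (NNReal.coe_le_coe.mpr h)
    push_cast at h'
    simpa [sub_add_cancel] using h'
  have hsub : (A - B) ^ p ≤ A ^ p - B ^ p := by linarith
  have hmain : A - B ≤ (A ^ p - B ^ p) ^ (1 / p) := by
    calc A - B = ((A - B) ^ p) ^ (1 / p) := by
          rw [← Real.rpow_mul (sub_nonneg.mpr hBA), mul_one_div, div_self hp0.ne',
            Real.rpow_one]
      _ ≤ (A ^ p - B ^ p) ^ (1 / p) :=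
          Real.rpow_le_rpow (Real.rpow_nonneg (sub_nonneg.mpr hBA) p) hsub
            (by positivity)
  have : 2 * (‖x‖ * ‖y‖ - RCLike.re (inner 𝕜 x y : 𝕜)) ≤ (A ^ p - B ^ p) ^ (1 / p) := by
    rw [← key]; exact hmain
  linarith
end

section
/- Let H be a real or complex inner product space and p ≥ 1. Then for all x, y ∈ H, ‖x‖‖y‖ − Re⟨x,y⟩ ≤ (1/2)·[‖x−y‖^{2p} − |‖x‖−‖y‖|^{2p}]^{1/p}. -/
lemma real_add_rpow_le {p a b : ℝ} (ha : 0 ≤ a) (hb : 0 ≤ b) (hp : 1 ≤ p) :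
    a ^ p + b ^ p ≤ (a + b) ^ p := by
  lift a to NNReal using ha
  lift b to NNReal using hb
  have := NNReal.add_rpow_le_rpow_add a b hp
  exact_mod_cast this

theorem stmt11 {𝕜 : Type*} [RCLike 𝕜] {H : Type*} [NormedAddCommGroup H]
    [InnerProductSpace 𝕜 H] (p : ℝ) (hp : 1 ≤ p) (x y : H) :
    ‖x‖ * ‖y‖ - RCLike.re (inner 𝕜 x y : 𝕜) ≤
      (1 / 2) * (‖x - y‖ ^ (2 * p) - |‖x‖ - ‖y‖| ^ (2 * p)) ^ (1 / p) := by
  have hp0 : 0 < p := lt_of_lt_of_le one_pos hp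
  set a := ‖x - y‖ with ha
  set b := |‖x‖ - ‖y‖| with hb
  have ha0 : (0:ℝ) ≤ a := norm_nonneg _
  have hb0 : (0:ℝ) ≤ b := abs_nonneg _
  have hba : b ≤ a := abs_norm_sub_norm_le x y
  -- key identity
  have key : ‖x‖ * ‖y‖ - RCLike.re (inner 𝕜 x y : 𝕜) = (1/2) * (a ^ 2 - b ^ 2) := by
    have hnormsq : a ^ 2 = ‖x‖ ^ 2 - 2 * RCLike.re (inner 𝕜 x y : 𝕜) + ‖y‖ ^ 2 := by
      rw [ha, @norm_sub_sq 𝕜]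
    have hbsq : b ^ 2 = (‖x‖ - ‖y‖) ^ 2 := sq_abs _
    rw [hnormsq, hbsq]; ring
  rw [key]
  have hu0 : (0:ℝ) ≤ a ^ 2 - b ^ 2 := by nlinarith
  -- superadditivity
  have hsum : (a ^ 2 - b ^ 2) ^ p + (b ^ 2) ^ p ≤ (a ^ 2) ^ p :=
    le_of_le_of_eq (real_add_rpow_le hu0 (by positivity) hp) (by ring_nf)
  have h1 : (a ^ 2 - b ^ 2) ^ p ≤ a ^ (2 * p) - b ^ (2 * p) := by
    have h2 : a ^ (2 * p) = (a ^ 2) ^ p := by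
      rw [← Real.rpow_natCast a 2, ← Real.rpow_mul ha0]; norm_num
    have h3 : b ^ (2 * p) = (b ^ 2) ^ p := by
      rw [← Real.rpow_natCast b 2, ← Real.rpow_mul hb0]; norm_num
    rw [h2, h3]; linarith
  have h4 : a ^ 2 - b ^ 2 ≤ (a ^ (2 * p) - b ^ (2 * p)) ^ (1 / p) := by
    have := Real.rpow_le_rpow (by positivity) h1 (by positivity : (0:ℝ) ≤ 1 / p)
    rwa [← Real.rpow_mul hu0, mul_one_div, div_self hp0.ne', Real.rpow_one] at this
  linarith
end

section
/- Let H be a complex inner product space, α, γ > 0, β ∈ ℂ with |β|² ≥ αγ, and x, a ∈ H with a ≠ 0 such that ‖x − (β/α)·a‖ ≤ (√(|β|² − αγ)/α)·‖a‖. Then ‖x‖²‖a‖² − |⟨x,a⟩|² ≤ ((|β|² − αγ)/(αγ))·|⟨x,a⟩|². -/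
theorem stmt17 {H : Type*} [NormedAddCommGroup H] [InnerProductSpace ℂ H]
    (α γ : ℝ) (hα : 0 < α) (hγ : 0 < γ) (β : ℂ) (hβ : α * γ ≤ ‖β‖ ^ 2)
    (x a : H) (ha : a ≠ 0)
    (h : ‖x - ((β / (α : ℂ)) • a)‖ ≤ (Real.sqrt (‖β‖ ^ 2 - α * γ) / α) * ‖a‖) :
    ‖x‖ ^ 2 * ‖a‖ ^ 2 - ‖(inner ℂ x a : ℂ)‖ ^ 2 ≤
      ((‖β‖ ^ 2 - α * γ) / (α * γ)) * ‖(inner ℂ x a : ℂ)‖ ^ 2 := by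
  have hs0 : (0:ℝ) ≤ ‖β‖ ^ 2 - α * γ := by linarith
  have hα' : (α:ℝ) ≠ 0 := hα.ne'
  set c : ℂ := β / (α : ℂ) with hc
  have hnc : ‖c‖ = ‖β‖ / α := by
    rw [hc, norm_div, Complex.norm_real, Real.norm_eq_abs, abs_of_pos hα]
  have hA : 0 ≤ ‖a‖ := norm_nonneg a
  have hX : 0 ≤ ‖x‖ := norm_nonneg x
  have ht : 0 ≤ ‖(inner ℂ x a : ℂ)‖ := norm_nonneg _
  have h2 : ‖x - c • a‖ ^ 2 ≤ (‖β‖ ^ 2 - α * γ) / α ^ 2 * ‖a‖ ^ 2 := by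
    have := pow_le_pow_left₀ (norm_nonneg _) h 2
    calc ‖x - c • a‖ ^ 2 ≤ (Real.sqrt (‖β‖ ^ 2 - α * γ) / α * ‖a‖) ^ 2 := this
      _ = (‖β‖ ^ 2 - α * γ) / α ^ 2 * ‖a‖ ^ 2 := by
          rw [mul_pow, div_pow, Real.sq_sqrt hs0]
  have hexp : ‖x - c • a‖ ^ 2 = ‖x‖ ^ 2 - 2 * Complex.re (inner ℂ x (c • a)) + ‖c‖ ^ 2 * ‖a‖ ^ 2 := by
    rw [@norm_sub_sq ℂ, norm_smul, mul_pow]; rfl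
  have hre : Complex.re (inner ℂ x (c • a)) ≤ (‖β‖ / α) * ‖(inner ℂ x a : ℂ)‖ := by
    rw [inner_smul_right]
    calc Complex.re (c * inner ℂ x a) ≤ ‖c * (inner ℂ x a : ℂ)‖ := Complex.re_le_norm _
      _ = (‖β‖ / α) * ‖(inner ℂ x a : ℂ)‖ := by rw [norm_mul, hnc]
  have h3 : ‖x‖ ^ 2 - 2 * ((‖β‖ / α) * ‖(inner ℂ x a : ℂ)‖) + (‖β‖ / α) ^ 2 * ‖a‖ ^ 2 ≤
      (‖β‖ ^ 2 - α * γ) / α ^ 2 * ‖a‖ ^ 2 := by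
    rw [hexp, hnc] at h2
    nlinarith [hre]
  have h4 : α * ‖x‖ ^ 2 + γ * ‖a‖ ^ 2 ≤ 2 * ‖β‖ * ‖(inner ℂ x a : ℂ)‖ := by
    have h3' := mul_le_mul_of_nonneg_left h3 (sq_nonneg α)
    have e1 : α ^ 2 * (‖x‖ ^ 2 - 2 * ((‖β‖ / α) * ‖(inner ℂ x a : ℂ)‖) + (‖β‖ / α) ^ 2 * ‖a‖ ^ 2)
        = α ^ 2 * ‖x‖ ^ 2 - 2 * α * ‖β‖ * ‖(inner ℂ x a : ℂ)‖ + ‖β‖ ^ 2 * ‖a‖ ^ 2 := by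
      field_simp
    have e2 : α ^ 2 * ((‖β‖ ^ 2 - α * γ) / α ^ 2 * ‖a‖ ^ 2) = (‖β‖ ^ 2 - α * γ) * ‖a‖ ^ 2 := by
      field_simp
    rw [e1, e2] at h3'
    nlinarith [h3']
  have h5 : α * γ * (‖x‖ ^ 2 * ‖a‖ ^ 2) ≤ ‖β‖ ^ 2 * ‖(inner ℂ x a : ℂ)‖ ^ 2 := by
    have hnn : (0:ℝ) ≤ α * ‖x‖ ^ 2 + γ * ‖a‖ ^ 2 := by positivity
    have hsq := mul_self_le_mul_self hnn h4
    nlinarith [hsq, sq_nonneg (α * ‖x‖ ^ 2 - γ * ‖a‖ ^ 2)]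
  have hαγ : (0:ℝ) < α * γ := mul_pos hα hγ
  rw [div_mul_eq_mul_div, le_div_iff₀ hαγ]
  nlinarith [h5]
end

section
/- Let H be a real or complex inner product space, e ∈ H with ‖e‖ = 1, and x₁,…,xₙ ∈ H \ {0} with ‖xᵢ/‖xᵢ‖ − e‖ ≤ rᵢ for each i. Then ∑ᵢ ‖xᵢ‖ − ‖∑ᵢ xᵢ‖ ≤ (1/2) ∑ᵢ rᵢ² ‖xᵢ‖. -/
theorem stmt19 {𝕜 : Type*} [RCLike 𝕜] {H : Type*} [NormedAddCommGroup H]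
    [InnerProductSpace 𝕜 H] (n : ℕ) (e : H) (he : ‖e‖ = 1)
    (x : Fin n → H) (hx : ∀ i, x i ≠ 0) (r : Fin n → ℝ) (hr : ∀ i, 0 ≤ r i)
    (h : ∀ i, ‖((‖x i‖ : 𝕜)⁻¹ • x i) - e‖ ≤ r i) :
    ∑ i, ‖x i‖ - ‖∑ i, x i‖ ≤ (1 / 2) * ∑ i, (r i) ^ 2 * ‖x i‖ := by
  have key : ∀ i, ‖x i‖ - RCLike.re (inner 𝕜 (x i) e : 𝕜) ≤ 1 / 2 * (r i ^ 2 * ‖x i‖) := by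
    intro i
    have hxi : (0:ℝ) < ‖x i‖ := norm_pos_iff.mpr (hx i)
    have hsq : ‖((‖x i‖ : 𝕜)⁻¹ • x i) - e‖ ^ 2 ≤ r i ^ 2 :=
      pow_le_pow_left₀ (norm_nonneg _) (h i) 2
    have hnu : ‖((‖x i‖ : 𝕜)⁻¹ • x i)‖ = 1 := by
      rw [norm_smul, norm_inv, RCLike.norm_ofReal, abs_of_pos hxi,
        inv_mul_cancel₀ hxi.ne']
    have hexp : ‖((‖x i‖ : 𝕜)⁻¹ • x i) - e‖ ^ 2
        = ‖((‖x i‖ : 𝕜)⁻¹ • x i)‖ ^ 2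
          - 2 * RCLike.re (inner 𝕜 ((‖x i‖ : 𝕜)⁻¹ • x i) e : 𝕜) + ‖e‖ ^ 2 :=
      @norm_sub_sq 𝕜 _ _ _ _ _ _
    have hre : RCLike.re (inner 𝕜 ((‖x i‖ : 𝕜)⁻¹ • x i) e : 𝕜)
        = ‖x i‖⁻¹ * RCLike.re (inner 𝕜 (x i) e : 𝕜) := by
      rw [inner_smul_left, map_inv₀, RCLike.conj_ofReal, ← RCLike.ofReal_inv,
        RCLike.re_ofReal_mul]
    rw [hexp, hnu, he, hre] at hsq
    have h4 : 2 - 2 * (‖x i‖⁻¹ * RCLike.re (inner 𝕜 (x i) e : 𝕜)) ≤ r i ^ 2 := by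
      nlinarith
    have h5 := mul_le_mul_of_nonneg_right h4 (le_of_lt hxi)
    have h6 : ‖x i‖⁻¹ * RCLike.re (inner 𝕜 (x i) e : 𝕜) * ‖x i‖
        = RCLike.re (inner 𝕜 (x i) e : 𝕜) := by
      field_simp
    nlinarith
  have h2 : RCLike.re (inner 𝕜 (∑ i, x i) e : 𝕜) ≤ ‖∑ i, x i‖ := by
    calc RCLike.re (inner 𝕜 (∑ i, x i) e : 𝕜) ≤ ‖∑ i, x i‖ * ‖e‖ := re_inner_le_norm _ _
    _ = ‖∑ i, x i‖ := by rw [he, mul_one]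
  have h3 : ∑ i, ‖x i‖ - RCLike.re (inner 𝕜 (∑ i, x i) e : 𝕜)
      ≤ ∑ i, 1 / 2 * (r i ^ 2 * ‖x i‖) := by
    rw [sum_inner]
    rw [map_sum, ← Finset.sum_sub_distrib]
    exact Finset.sum_le_sum fun i _ => key i
  have := Finset.mul_sum (Finset.univ) (fun i => r i ^ 2 * ‖x i‖) (1/2 : ℝ)
  linarith [h3, h2, this]
end
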